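/- Let n ≥ 3 and |Ω| < ∞. For any measurable f on Ω, ∫₀^{|Ω|} r^{−2/n'} (∫₀^r (f*)²(ρ) dρ) dr ≤ c(n)·‖f‖²_{L^{n,1}(Ω)}, where n' = n/(n−1) and ‖f‖_{L^{n,1}(Ω)} = ∫₀^{|Ω|} s^{1/n − 1} f*(s) ds. -/

import Mathlib

open MeasureTheory

/-- The decreasing rearrangement of a measurable function `φ` with respect to the
measure `m`. -/
noncomputable def rearr {α : Type*} [MeasurableSpace α] (m : Measure α)
    (φ : α → ℝ) (s : ℝ) : ℝ :=
  sInf {t : ℝ | 0 ≤ t ∧ m {x | t < |φ x|} ≤ ENNReal.ofReal s}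

open Set Filter Topology ENNReal

lemma rearr_nonneg {α : Type*} [MeasurableSpace α] (m : Measure α) (φ : α → ℝ) (s : ℝ) :
    0 ≤ rearr m φ s :=
  Real.sInf_nonneg fun _ ht => ht.1

lemma rearr_set_nonempty {α : Type*} [MeasurableSpace α] (m : Measure α)
    (hfin : m Set.univ ≠ ⊤) (φ : α → ℝ) (hφ : Measurable φ) {s : ℝ} (hs : 0 < s) :
    {t : ℝ | 0 ≤ t ∧ m {x | t < |φ x|} ≤ ENNReal.ofReal s}.Nonempty := by
  have hmeas : ∀ k : ℕ, MeasurableSet {x | (k : ℝ) < |φ x|} := fun k =>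
    measurableSet_lt measurable_const hφ.abs
  have hanti : Antitone (fun k : ℕ => ({x : α | (k : ℝ) < |φ x|} : Set α)) := by
    intro i j hij x hx
    exact lt_of_le_of_lt ((Nat.cast_le (α := ℝ)).mpr hij) hx
  have hempty : ⋂ k : ℕ, {x | (k : ℝ) < |φ x|} = ∅ := by
    ext x
    simp only [Set.mem_iInter, Set.mem_setOf_eq, Set.mem_empty_iff_false, iff_false]
    push_neg
    obtain ⟨k, hk⟩ := exists_nat_gt |φ x|
    exact ⟨k, hk.le⟩
  have htend : Tendsto (fun k : ℕ => m {x | (k : ℝ) < |φ x|}) atTop (𝓝 0) := by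
    have h := tendsto_measure_iInter_atTop (μ := m)
      (fun k => (hmeas k).nullMeasurableSet) hanti
      ⟨0, ((measure_mono (Set.subset_univ _)).trans_lt (lt_top_iff_ne_top.2 hfin)).ne⟩
    rw [hempty, measure_empty] at h
    exact h
  have hev : ∀ᶠ k : ℕ in atTop, m {x | (k : ℝ) < |φ x|} < ENNReal.ofReal s :=
    htend.eventually_lt_const (ENNReal.ofReal_pos.2 hs)
  obtain ⟨k, hk⟩ := hev.exists
  exact ⟨(k : ℝ), Nat.cast_nonneg k, hk.le⟩

lemma rearr_antitoneOn {α : Type*} [MeasurableSpace α] (m : Measure α)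
    (hfin : m Set.univ ≠ ⊤) (φ : α → ℝ) (hφ : Measurable φ) :
    AntitoneOn (rearr m φ) (Set.Ioi 0) := by
  intro s hs s' _ hss'
  apply csInf_le_csInf
  · exact ⟨0, fun t ht => ht.1⟩
  · exact rearr_set_nonempty m hfin φ hφ hs
  · intro t ht
    exact ⟨ht.1, ht.2.trans (ENNReal.ofReal_le_ofReal hss')⟩

lemma exists_measurable_extension {g : ℝ → ℝ} (hg : AntitoneOn g (Set.Ioi 0)) :
    ∃ h : ℝ → ℝ, Measurable h ∧ ∀ s : ℝ, 0 < s → h s = g s := by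
  refine ⟨(Set.Ioi (0:ℝ)).indicator g, ?_, fun s hs => Set.indicator_of_mem hs g⟩
  have hmeas : ∀ k : ℕ, Measurable ((Set.Ioi (1 / ((k : ℝ) + 1))).indicator g) := by
    intro k
    have hpos : 0 < 1 / ((k : ℝ) + 1) := by positivity
    have heq : (Set.Ioi (1 / ((k : ℝ) + 1))).indicator g
        = (Set.Ioi (1 / ((k : ℝ) + 1))).indicator
            (fun s => g (max s (1 / ((k : ℝ) + 1)))) := by
      funext s
      by_cases h : s ∈ Set.Ioi (1 / ((k : ℝ) + 1))
      · rw [Set.indicator_of_mem h, Set.indicator_of_mem h, max_eq_left (le_of_lt h)]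
      · rw [Set.indicator_of_notMem h, Set.indicator_of_notMem h]
    rw [heq]
    have hant : Antitone fun s => g (max s (1 / ((k : ℝ) + 1))) := by
      intro x y hxy
      exact hg (lt_of_lt_of_le hpos (le_max_right _ _))
        (lt_of_lt_of_le hpos (le_max_right _ _)) (max_le_max hxy le_rfl)
    exact hant.measurable.indicator measurableSet_Ioi
  apply measurable_of_tendsto_metrizable' atTop hmeas
  rw [tendsto_pi_nhds]
  intro s
  by_cases hs : 0 < s
  · obtain ⟨k, hk⟩ := exists_nat_gt (1 / s)
    rw [Set.indicator_of_mem (Set.mem_Ioi.mpr hs) g]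
    apply tendsto_const_nhds.congr'
    filter_upwards [eventually_ge_atTop k] with j hj
    have h1 : 1 / ((j : ℝ) + 1) < s := by
      have hk' : 1 / s < (j : ℝ) + 1 :=
        hk.trans_le (by exact_mod_cast Nat.le_succ_of_le hj)
      rw [div_lt_iff₀ (by positivity)]
      rw [div_lt_iff₀ hs] at hk'
      nlinarith
    rw [Set.indicator_of_mem (Set.mem_Ioi.mpr h1) g]
  · have h0 : (Set.Ioi (0:ℝ)).indicator g s = 0 :=
      Set.indicator_of_notMem (by simpa using hs) g
    rw [h0]
    apply tendsto_const_nhds.congr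
    intro k
    exact (Set.indicator_of_notMem
      (fun h => hs (lt_trans (by positivity) (Set.mem_Ioi.mp h))) g).symm

theorem stmt17 (n : ℕ) (hn : 3 ≤ n) :
    ∃ c : ℝ, 0 < c ∧ ∀ (Ω : Set (EuclideanSpace ℝ (Fin n))), MeasurableSet Ω →
      volume Ω < ⊤ → ∀ f : EuclideanSpace ℝ (Fin n) → ℝ, Measurable f →
      (∫⁻ r in Set.Ioo (0:ℝ) (volume Ω).toReal,
          ENNReal.ofReal (r ^ (-(2 * ((n:ℝ) - 1) / n))) *
            ∫⁻ ρ in Set.Ioo (0:ℝ) r,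
              ENNReal.ofReal ((rearr (volume.restrict Ω) f ρ) ^ 2)) ≤
        ENNReal.ofReal c *
          (∫⁻ s in Set.Ioo (0:ℝ) (volume Ω).toReal,
            ENNReal.ofReal (s ^ ((1:ℝ)/n - 1) * rearr (volume.restrict Ω) f s)) ^ 2 := by
  have hn3 : (3:ℝ) ≤ (n:ℝ) := by exact_mod_cast hn
  have hnpos : (0:ℝ) < (n:ℝ) := by linarith
  set a : ℝ := 2 * ((n:ℝ) - 1) / n with ha_def
  have ha1 : 1 < a := by
    rw [ha_def, lt_div_iff₀ hnpos]; linarith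
  set b : ℝ := (1:ℝ)/n - 1 with hb_def
  have hb0 : b ≤ 0 := by
    rw [hb_def]
    have h1 : (1:ℝ)/n ≤ 1 := by rw [div_le_one hnpos]; linarith
    linarith
  refine ⟨2 / (a - 1), div_pos two_pos (by linarith), ?_⟩
  intro Ω hΩ hΩfin f hf
  set m : Measure (EuclideanSpace ℝ (Fin n)) := volume.restrict Ω with hm
  set M : ℝ := (volume Ω).toReal with hM
  set g : ℝ → ℝ := rearr m f with hgdef
  have hfin : m Set.univ ≠ ⊤ := by
    rw [hm, Measure.restrict_apply_univ]; exact hΩfin.ne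
  have g_nonneg : ∀ s, 0 ≤ g s := fun s => rearr_nonneg m f s
  have g_anti : AntitoneOn g (Set.Ioi 0) := rearr_antitoneOn m hfin f hf
  obtain ⟨gt, gt_meas, gt_eq⟩ := exists_measurable_extension g_anti
  have gt_nonneg : ∀ s : ℝ, 0 < s → 0 ≤ gt s := fun s hs => by
    rw [gt_eq s hs]; exact g_nonneg s
  set N : ℝ≥0∞ := ∫⁻ s in Set.Ioo (0:ℝ) M, ENNReal.ofReal (s ^ b * g s) with hN
  have hNg : N = ∫⁻ s in Set.Ioo (0:ℝ) M, ENNReal.ofReal (s ^ b * gt s) := by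
    rw [hN]
    exact setLIntegral_congr_fun measurableSet_Ioo
      (fun s hs => by rw [gt_eq s hs.1])
  -- Lemma A
  have hA : ∀ ρ : ℝ, 0 < ρ → ρ ≤ M →
      ENNReal.ofReal (ρ ^ ((1:ℝ)/n) * gt ρ) ≤ 2 * N := by
    intro ρ hρ hρM
    have hsub : Set.Ioo (ρ/2) ρ ⊆ Set.Ioo (0:ℝ) M :=
      fun x hx => ⟨lt_trans (by linarith) hx.1, lt_of_lt_of_le hx.2 hρM⟩
    have key : ENNReal.ofReal (ρ ^ b * gt ρ) * ENNReal.ofReal (ρ/2) ≤ N := by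
      have hvol : volume (Set.Ioo (ρ/2) ρ) = ENNReal.ofReal (ρ/2) := by
        rw [Real.volume_Ioo]; congr 1; ring
      rw [hNg, ← hvol]
      calc ENNReal.ofReal (ρ ^ b * gt ρ) * volume (Set.Ioo (ρ/2) ρ)
          = ∫⁻ _ in Set.Ioo (ρ/2) ρ, ENNReal.ofReal (ρ ^ b * gt ρ) :=
            (setLIntegral_const _ _).symm
        _ ≤ ∫⁻ s in Set.Ioo (ρ/2) ρ, ENNReal.ofReal (s ^ b * gt s) := by
            apply lintegral_mono_ae
            filter_upwards [self_mem_ae_restrict measurableSet_Ioo] with s hs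
            apply ENNReal.ofReal_le_ofReal
            have hs0 : 0 < s := lt_trans (by linarith) hs.1
            have h1 : ρ ^ b ≤ s ^ b := Real.rpow_le_rpow_of_nonpos hs0 hs.2.le hb0
            have h2 : gt ρ ≤ gt s := by
              rw [gt_eq ρ hρ, gt_eq s hs0]
              exact g_anti (Set.mem_Ioi.mpr hs0) (Set.mem_Ioi.mpr hρ) hs.2.le
            exact mul_le_mul h1 h2 (gt_nonneg ρ hρ) (Real.rpow_nonneg hs0.le b)
        _ ≤ ∫⁻ s in Set.Ioo (0:ℝ) M, ENNReal.ofReal (s ^ b * gt s) :=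
            lintegral_mono_set hsub
    have hre : ρ ^ ((1:ℝ)/n) * gt ρ = 2 * ((ρ ^ b * gt ρ) * (ρ/2)) := by
      have h1n : (1:ℝ)/n = b + 1 := by rw [hb_def]; ring
      rw [h1n, Real.rpow_add_one hρ.ne' b]; ring
    calc ENNReal.ofReal (ρ ^ ((1:ℝ)/n) * gt ρ)
        = 2 * (ENNReal.ofReal (ρ ^ b * gt ρ) * ENNReal.ofReal (ρ/2)) := by
          rw [hre, ENNReal.ofReal_mul (by norm_num : (0:ℝ) ≤ 2),
            ENNReal.ofReal_mul (mul_nonneg (Real.rpow_nonneg hρ.le b) (gt_nonneg ρ hρ))]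
          norm_num
      _ ≤ 2 * N := mul_le_mul_right key 2
  -- value of the outer improper integral
  have hIoi : ∀ ρ : ℝ, 0 < ρ →
      (∫⁻ r in Set.Ioi ρ, ENNReal.ofReal (r ^ (-a)))
        = ENNReal.ofReal (ρ ^ (1-a) / (a-1)) := by
    intro ρ hρ
    have hint : IntegrableOn (fun r : ℝ => r ^ (-a)) (Set.Ioi ρ) :=
      integrableOn_Ioi_rpow_of_lt (by linarith) hρ
    have hnn : 0 ≤ᵐ[volume.restrict (Set.Ioi ρ)] fun r : ℝ => r ^ (-a) := by
      filter_upwards [self_mem_ae_restrict measurableSet_Ioi] with r hr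
      exact Real.rpow_nonneg (le_of_lt (hρ.trans hr)) _
    rw [← ofReal_integral_eq_lintegral_ofReal hint hnn]
    congr 1
    rw [integral_Ioi_rpow_of_lt (by linarith) hρ]
    have e1 : -a + 1 = 1 - a := by ring
    rw [e1, div_eq_div_iff (by linarith : (1:ℝ) - a ≠ 0) (by linarith : a - 1 ≠ 0)]
    ring
  by_cases hNtop : N = ⊤
  · rw [hNtop]
    have htop : ENNReal.ofReal (2/(a-1)) * (⊤:ℝ≥0∞) ^ 2 = ⊤ := by
      rw [ENNReal.top_pow (by norm_num), ENNReal.mul_top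
        (ENNReal.ofReal_pos.mpr (div_pos two_pos (by linarith))).ne']
    rw [htop]
    exact le_top
  -- the kernel for Fubini
  set K : ℝ → ℝ → ℝ≥0∞ := fun r ρ => Set.indicator (Set.Ioo (0:ℝ) r)
    (fun ρ' => ENNReal.ofReal (r ^ (-a)) * ENNReal.ofReal (gt ρ' ^ 2)) ρ with hK
  have hKmeas : Measurable (Function.uncurry K) := by
    have huncurry : Function.uncurry K = Set.indicator {p : ℝ × ℝ | 0 < p.2 ∧ p.2 < p.1}
        (fun p => ENNReal.ofReal (p.1 ^ (-a)) * ENNReal.ofReal (gt p.2 ^ 2)) := by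
      funext p
      simp only [Function.uncurry, hK, Set.indicator_apply, Set.mem_Ioo, Set.mem_setOf_eq]
    rw [huncurry]
    apply Measurable.indicator
    · exact ((measurable_fst.pow measurable_const).ennreal_ofReal).mul
        (((gt_meas.comp measurable_snd).pow measurable_const).ennreal_ofReal)
    · exact (measurableSet_lt measurable_const measurable_snd).inter
        (measurableSet_lt measurable_snd measurable_fst)
  have step1 : ∀ r ∈ Set.Ioo (0:ℝ) M,
      ENNReal.ofReal (r ^ (-a)) * (∫⁻ ρ in Set.Ioo (0:ℝ) r, ENNReal.ofReal (gt ρ ^ 2))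
        = ∫⁻ ρ in Set.Ioo (0:ℝ) M, K r ρ := by
    intro r hr
    have hss : Set.Ioo (0:ℝ) r ⊆ Set.Ioo (0:ℝ) M :=
      fun x hx => ⟨hx.1, lt_trans hx.2 hr.2⟩
    simp only [hK]
    rw [lintegral_indicator measurableSet_Ioo,
      Measure.restrict_restrict measurableSet_Ioo,
      Set.inter_eq_left.mpr hss,
      lintegral_const_mul' _ _ ENNReal.ofReal_ne_top]
  have step2 : ∀ ρ ∈ Set.Ioo (0:ℝ) M,
      (∫⁻ r in Set.Ioo (0:ℝ) M, K r ρ)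
        = (∫⁻ r in Set.Ioo ρ M, ENNReal.ofReal (r ^ (-a))) * ENNReal.ofReal (gt ρ ^ 2) := by
    intro ρ hρ
    have hKρ : ∀ r, K r ρ = Set.indicator (Set.Ioi ρ)
        (fun r' => ENNReal.ofReal (r' ^ (-a)) * ENNReal.ofReal (gt ρ ^ 2)) r := by
      intro r
      simp only [hK, Set.indicator_apply, Set.mem_Ioo, Set.mem_Ioi]
      by_cases h : ρ < r
      · simp [h, hρ.1]
      · simp [h]
    simp_rw [hKρ]
    have hIcap : Set.Ioi ρ ∩ Set.Ioo (0:ℝ) M = Set.Ioo ρ M :=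
      Set.ext fun x => ⟨fun ⟨h1, h2⟩ => ⟨h1, h2.2⟩,
        fun ⟨h1, h2⟩ => ⟨h1, lt_trans hρ.1 h1, h2⟩⟩
    rw [lintegral_indicator measurableSet_Ioi,
      Measure.restrict_restrict measurableSet_Ioi, hIcap,
      lintegral_mul_const' _ _ ENNReal.ofReal_ne_top]
  have hconst_ne_top : ENNReal.ofReal (1/(a-1)) * (2 * N) ≠ ⊤ :=
    ENNReal.mul_ne_top ENNReal.ofReal_ne_top
      (ENNReal.mul_ne_top ENNReal.ofNat_ne_top hNtop)
  calc (∫⁻ r in Set.Ioo (0:ℝ) M,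
          ENNReal.ofReal (r ^ (-a)) *
            ∫⁻ ρ in Set.Ioo (0:ℝ) r, ENNReal.ofReal (g ρ ^ 2))
      = ∫⁻ r in Set.Ioo (0:ℝ) M,
          ENNReal.ofReal (r ^ (-a)) *
            ∫⁻ ρ in Set.Ioo (0:ℝ) r, ENNReal.ofReal (gt ρ ^ 2) := by
        apply setLIntegral_congr_fun measurableSet_Ioo
        intro r hr
        beta_reduce
        congr 1
        exact setLIntegral_congr_fun measurableSet_Ioo
          (fun ρ hρ => by rw [gt_eq ρ hρ.1])
    _ = ∫⁻ r in Set.Ioo (0:ℝ) M, ∫⁻ ρ in Set.Ioo (0:ℝ) M, K r ρ :=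
        setLIntegral_congr_fun measurableSet_Ioo step1
    _ = ∫⁻ ρ in Set.Ioo (0:ℝ) M, ∫⁻ r in Set.Ioo (0:ℝ) M, K r ρ :=
        lintegral_lintegral_swap hKmeas.aemeasurable
    _ = ∫⁻ ρ in Set.Ioo (0:ℝ) M,
          (∫⁻ r in Set.Ioo ρ M, ENNReal.ofReal (r ^ (-a))) * ENNReal.ofReal (gt ρ ^ 2) :=
        setLIntegral_congr_fun measurableSet_Ioo step2
    _ ≤ ∫⁻ ρ in Set.Ioo (0:ℝ) M,
          (ENNReal.ofReal (1/(a-1)) * (2 * N)) * ENNReal.ofReal (ρ ^ b * gt ρ) := by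
        apply lintegral_mono_ae
        filter_upwards [self_mem_ae_restrict measurableSet_Ioo] with ρ hρ
        have hρ0 : 0 < ρ := hρ.1
        have hstep : (∫⁻ r in Set.Ioo ρ M, ENNReal.ofReal (r ^ (-a)))
            ≤ ENNReal.ofReal (ρ ^ (1-a) / (a-1)) := by
          calc (∫⁻ r in Set.Ioo ρ M, ENNReal.ofReal (r ^ (-a)))
              ≤ ∫⁻ r in Set.Ioi ρ, ENNReal.ofReal (r ^ (-a)) :=
                lintegral_mono_set Set.Ioo_subset_Ioi_self
            _ = ENNReal.ofReal (ρ ^ (1-a) / (a-1)) := hIoi ρ hρ0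
        refine le_trans (mul_le_mul_left hstep _) ?_
        have hsplit : ENNReal.ofReal (ρ ^ (1-a) / (a-1)) * ENNReal.ofReal (gt ρ ^ 2)
            = ENNReal.ofReal (1/(a-1)) *
              (ENNReal.ofReal (ρ ^ ((1:ℝ)/n) * gt ρ) * ENNReal.ofReal (ρ ^ b * gt ρ)) := by
          rw [← ENNReal.ofReal_mul (mul_nonneg (Real.rpow_nonneg hρ0.le _)
              (gt_nonneg ρ hρ0)),
            ← ENNReal.ofReal_mul (div_nonneg zero_le_one (by linarith) : (0:ℝ) ≤ 1/(a-1)),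
            ← ENNReal.ofReal_mul (div_nonneg (Real.rpow_nonneg hρ0.le _) (by linarith))]
          congr 1
          have hsum : ρ ^ ((1:ℝ)-a) = ρ ^ ((1:ℝ)/n) * ρ ^ b := by
            rw [← Real.rpow_add hρ0]
            congr 1
            rw [hb_def, ha_def]
            field_simp
            ring
          rw [hsum]
          ring
        rw [hsplit, mul_assoc]
        exact mul_le_mul_right (mul_le_mul_left (hA ρ hρ0 hρ.2.le) _) _
    _ = (ENNReal.ofReal (1/(a-1)) * (2 * N)) * N := by
        rw [lintegral_const_mul' _ _ hconst_ne_top, ← hNg]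
    _ ≤ ENNReal.ofReal (2/(a-1)) * N ^ 2 := by
        have h2 : ENNReal.ofReal (2/(a-1)) = 2 * ENNReal.ofReal (1/(a-1)) := by
          rw [show (2:ℝ)/(a-1) = 2 * (1/(a-1)) by ring,
            ENNReal.ofReal_mul (by norm_num : (0:ℝ) ≤ 2)]
          norm_num
        rw [h2, pow_two]
        exact le_of_eq (by ring)
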